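/- Let Γ act by isometries on the real line ℝ, and suppose some element x ∈ Γ acts by an orientation-reversing isometry. If the translation length function ℓ(γ) := inf_{p∈ℝ} |γ·p − p| satisfies ℓ(xy) = ℓ(y) for every y ∈ Γ, then every element of Γ acts either as the identity or as the same reflection as x; in particular ℓ is identically zero. -/
import Mathlib

/-- Classification of isometries of ℝ: translation or reflection. -/
lemma isometry_real_classify (f : ℝ → ℝ) (hf : Isometry f) :
    (∀ p : ℝ, f p = p + f 0) ∨ (∀ p : ℝ, f p = f 0 - p) := by
  have hd : ∀ p q : ℝ, |f p - f q| = |p - q| := by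
    intro p q
    have := hf.dist_eq p q
    simpa [Real.dist_eq] using this
  have h1 : |f 1 - f 0| = |(1 : ℝ)| := by simpa using hd 1 0
  rcases abs_eq_abs.mp h1 with h1 | h1
  · left
    intro p
    have hp : |f p - f 0| = |p| := by simpa using hd p 0
    have hp1 : |(f p - f 0) - 1| = |p - 1| := by
      have := hd p 1
      have e : f p - f 1 = (f p - f 0) - 1 := by linarith
      rwa [e] at this
    rcases abs_eq_abs.mp hp with h2 | h2
    · linarith
    · rw [h2] at hp1
      rcases abs_eq_abs.mp hp1 with h3 | h3 <;> linarith
  · right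
    intro p
    have hp : |f p - f 0| = |p| := by simpa using hd p 0
    have hp1 : |(f p - f 0) + 1| = |p - 1| := by
      have := hd p 1
      have e : f p - f 1 = (f p - f 0) + 1 := by linarith
      rwa [e] at this
    rcases abs_eq_abs.mp hp with h2 | h2
    · rw [h2] at hp1
      rcases abs_eq_abs.mp hp1 with h3 | h3 <;> linarith
    · linarith

lemma iInf_abs_reflect (b : ℝ) : (⨅ p : ℝ, |b - p - p|) = 0 := by
  apply le_antisymm
  · have := ciInf_le (f := fun p : ℝ => |b - p - p|)
      ⟨0, fun y ⟨p, hp⟩ => hp ▸ abs_nonneg _⟩ (b / 2)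
    calc (⨅ p : ℝ, |b - p - p|) ≤ |b - b/2 - b/2| := this
      _ = 0 := by rw [show b - b/2 - b/2 = (0:ℝ) from by ring, abs_zero]
  · exact Real.iInf_nonneg fun p => abs_nonneg _

lemma iInf_abs_translate (a : ℝ) : (⨅ p : ℝ, |p + a - p|) = |a| := by
  simp

/-- If Γ acts on ℝ by isometries, some `x ∈ Γ` acts by an orientation-reversing
isometry `p ↦ c - p`, and the translation length function `ℓ(γ) = ⨅ p, |γ·p - p|`
satisfies `ℓ(x y) = ℓ(y)` for all `y`, then every element of Γ acts as the identity
or as the same reflection as `x`; in particular ℓ vanishes identically. -/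
theorem stmt2 {Γ : Type*} [Group Γ] (ρ : Γ → ℝ → ℝ)
    (hiso : ∀ γ : Γ, Isometry (ρ γ))
    (hone : ∀ p : ℝ, ρ 1 p = p)
    (hmul : ∀ (γ δ : Γ) (p : ℝ), ρ (γ * δ) p = ρ γ (ρ δ p))
    (x : Γ) (c : ℝ) (hx : ∀ p : ℝ, ρ x p = c - p)
    (ℓ : Γ → ℝ) (hℓ : ∀ γ : Γ, ℓ γ = ⨅ p : ℝ, |ρ γ p - p|)
    (h : ∀ y : Γ, ℓ (x * y) = ℓ y) :
    (∀ γ : Γ, (∀ p : ℝ, ρ γ p = p) ∨ (∀ p : ℝ, ρ γ p = c - p)) ∧ (∀ γ : Γ, ℓ γ = 0) := by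
  have key : ∀ γ : Γ, (∀ p : ℝ, ρ γ p = p) ∨ (∀ p : ℝ, ρ γ p = c - p) := by
    intro γ
    rcases isometry_real_classify (ρ γ) (hiso γ) with hcase | hcase
    · -- translation by a = ρ γ 0
      left
      set a := ρ γ 0 with ha
      -- x*γ is a reflection
      have href : ∀ p : ℝ, ρ (x * γ) p = (c - a) - p := by
        intro p
        rw [hmul, hcase p, hx]
        ring
      have hxy : ℓ (x * γ) = 0 := by
        rw [hℓ]
        have : ∀ p : ℝ, |ρ (x * γ) p - p| = |(c - a) - p - p| := fun p => by rw [href]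
        simp only [this]
        exact iInf_abs_reflect (c - a)
      have hy : ℓ γ = |a| := by
        rw [hℓ]
        have : ∀ p : ℝ, |ρ γ p - p| = |p + a - p| := fun p => by rw [hcase]
        simp only [this]
        exact iInf_abs_translate a
      have : |a| = 0 := by rw [← hy, ← h γ, hxy]
      have ha0 : a = 0 := abs_eq_zero.mp this
      intro p
      rw [hcase, ha0, add_zero]
    · -- reflection with b = ρ γ 0
      right
      set b := ρ γ 0 with hb
      have htr : ∀ p : ℝ, ρ (x * γ) p = p + (c - b) := by
        intro p
        rw [hmul, hcase p, hx]
        ring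
      have hxy : ℓ (x * γ) = |c - b| := by
        rw [hℓ]
        have : ∀ p : ℝ, |ρ (x * γ) p - p| = |p + (c - b) - p| := fun p => by rw [htr]
        simp only [this]
        exact iInf_abs_translate (c - b)
      have hy : ℓ γ = 0 := by
        rw [hℓ]
        have : ∀ p : ℝ, |ρ γ p - p| = |b - p - p| := fun p => by rw [hcase]
        simp only [this]
        exact iInf_abs_reflect b
      have : |c - b| = 0 := by rw [← hxy, h γ, hy]
      have hcb : c = b := by
        have := abs_eq_zero.mp this; linarith
      intro p
      rw [hcase, hcb]
  refine ⟨key, fun γ => ?_⟩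
  rcases key γ with hcase | hcase
  · rw [hℓ]
    have : ∀ p : ℝ, |ρ γ p - p| = 0 := fun p => by rw [hcase]; simp
    simp only [this]
    exact ciInf_const
  · rw [hℓ]
    have : ∀ p : ℝ, |ρ γ p - p| = |c - p - p| := fun p => by rw [hcase]
    simp only [this]
    exact iInf_abs_reflect c
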